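/- L² form of Lemmas 'Approx T*' and 'Approx B' (zero order): let Ω ⊆ ℝ be a measurable set of finite Lebesgue measure μ(Ω), and let v : ℝ × ℝ → ℝ be Y-periodic in its second variable and Lipschitz in its first variable with constant L ≥ 0, uniformly in the second variable. Then for every ε > 0, (∫_Ω ((T_ε* v)(x) − (B_ε v)(x))² dx)^{1/2} ≤ L·ε·μ(Ω)^{1/2}; in particular T_ε* v = B_ε v + O(ε) and B_ε v = T_ε* v + O(ε), where O(ε) denotes a function whose L²(Ω)-norm vanishes as ε → 0⁺. -/

import Mathlib

open MeasureTheory intervalIntegral Set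

/-- `kEps ε x = ⌊x/ε + 1/2⌋`. -/
noncomputable def kEps (ε x : ℝ) : ℤ := ⌊x / ε + 1 / 2⌋

/-- `cEps ε x = ε · kEps ε x`. -/
noncomputable def cEps (ε x : ℝ) : ℝ := ε * (kEps ε x : ℝ)

/-- `yEps ε x = x/ε − kEps ε x`. -/
noncomputable def yEps (ε x : ℝ) : ℝ := x / ε - (kEps ε x : ℝ)

/-- The adjoint two-scale transform `(T_ε* w)(x) = ∫_{−1/2}^{1/2} w(c_ε(x) + ε·z, y_ε(x)) dz`. -/
noncomputable def twoScaleAdj (ε : ℝ) (w : ℝ → ℝ → ℝ) (x : ℝ) : ℝ :=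
  ∫ z in (-(1:ℝ)/2)..(1/2), w (cEps ε x + ε * z) (yEps ε x)

/-- The regularization operator `(B_ε w)(x) = w(x, x/ε)`. -/
noncomputable def regOp (ε : ℝ) (w : ℝ → ℝ → ℝ) (x : ℝ) : ℝ := w x (x / ε)

lemma per_int (v : ℝ → ℝ → ℝ) (hper : ∀ x y : ℝ, v x (y + 1) = v x y)
    (x y : ℝ) (n : ℤ) : v x (y + n) = v x y := by
  induction n using Int.induction_on with
  | zero => simp
  | succ n ih =>
      have h : (((n:ℤ) + 1 : ℤ) : ℝ) = (n:ℝ) + 1 := by push_cast; ring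
      rw [h, show y + ((n:ℝ) + 1) = (y + (n:ℝ)) + 1 by ring, hper]
      exact_mod_cast ih
  | pred n ih =>
      have h : ((-(n:ℤ) - 1 : ℤ) : ℝ) = -(n:ℝ) - 1 := by push_cast; ring
      rw [h]
      have h2 := hper x (y + (-(n:ℝ) - 1))
      rw [show y + (-(n:ℝ) - 1) + 1 = y + -(n:ℝ) by ring] at h2
      have ih' : v x (y + -(n:ℝ)) = v x y := by exact_mod_cast ih
      rw [← h2, ih']

lemma pointwise_bound (v : ℝ → ℝ → ℝ)
    (hper : ∀ x y : ℝ, v x (y + 1) = v x y)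
    (L : ℝ) (hL : 0 ≤ L)
    (hLip : ∀ x x' y : ℝ, |v x y - v x' y| ≤ L * |x - x'|)
    (ε : ℝ) (hε : 0 < ε) (x : ℝ) :
    |twoScaleAdj ε v x - regOp ε v x| ≤ L * ε := by
  set k := kEps ε x with hk
  set y := yEps ε x with hy
  have hεne : ε ≠ 0 := ne_of_gt hε
  have hx : x = cEps ε x + ε * y := by
    rw [hy]; unfold yEps cEps; field_simp; ring
  have hyk : y + (k : ℝ) = x / ε := by rw [hy]; unfold yEps; ring
  have hreg : regOp ε v x = v x y := by
    unfold regOp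
    rw [← hyk, per_int v hper]
  have hylo : -(1/2 : ℝ) ≤ y := by
    rw [hy]; unfold yEps kEps
    have := Int.floor_le (x / ε + 1/2)
    push_cast at this ⊢
    linarith
  have hyhi : y < 1/2 := by
    rw [hy]; unfold yEps kEps
    have := Int.lt_floor_add_one (x / ε + 1/2)
    push_cast at this ⊢
    linarith
  have hlipf : LipschitzWith (Real.toNNReal (L * ε))
      (fun z => v (cEps ε x + ε * z) y) := by
    apply LipschitzWith.of_dist_le_mul
    intro a b
    rw [Real.dist_eq, Real.dist_eq,
      Real.coe_toNNReal _ (by positivity)]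
    calc |v (cEps ε x + ε * a) y - v (cEps ε x + ε * b) y|
        ≤ L * |(cEps ε x + ε * a) - (cEps ε x + ε * b)| := hLip _ _ _
      _ = L * ε * |a - b| := by
          rw [show (cEps ε x + ε * a) - (cEps ε x + ε * b) = ε * (a - b) by ring,
            abs_mul, abs_of_pos hε, mul_assoc]
  have hint : IntervalIntegrable (fun z => v (cEps ε x + ε * z) y) volume
      (-(1:ℝ)/2) (1/2) := hlipf.continuous.intervalIntegrable _ _
  have hdiff : twoScaleAdj ε v x - regOp ε v x =
      ∫ z in (-(1:ℝ)/2)..(1/2), (v (cEps ε x + ε * z) y - v x y) := by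
    rw [intervalIntegral.integral_sub hint (intervalIntegrable_const),
      intervalIntegral.integral_const, hreg]
    unfold twoScaleAdj
    rw [← hy]
    norm_num
  rw [hdiff]
  have := intervalIntegral.norm_integral_le_of_norm_le_const
    (C := L * ε) (f := fun z => v (cEps ε x + ε * z) y - v x y)
    (a := -(1:ℝ)/2) (b := 1/2) ?_
  · rw [Real.norm_eq_abs] at this
    have h1 : |((1:ℝ)/2) - (-(1:ℝ)/2)| = 1 := by norm_num
    rw [h1, mul_one] at this
    exact this
  · intro z hz
    rw [Set.uIoc_of_le (by norm_num : -(1:ℝ)/2 ≤ 1/2)] at hz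
    obtain ⟨hz1, hz2⟩ := hz
    rw [Real.norm_eq_abs]
    calc |v (cEps ε x + ε * z) y - v x y| ≤ L * |(cEps ε x + ε * z) - x| :=
          hLip _ _ _
      _ = L * ε * |z - y| := by
          have key : (cEps ε x + ε * z) - x = ε * (z - y) := by
            rw [hy]; unfold cEps yEps; field_simp; ring
          rw [key, abs_mul, abs_of_pos hε, mul_assoc]
      _ ≤ L * ε * 1 := by
          have : |z - y| ≤ 1 := abs_le.mpr ⟨by linarith, by linarith⟩
          exact mul_le_mul_of_nonneg_left this (by positivity)
      _ = L * ε := mul_one _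

/-- L² form of Lemmas "Approx T*" and "Approx B" at zero order:
the L²(Ω)-norm of `T_ε* v − B_ε v` is at most `L·ε·μ(Ω)^{1/2}`. -/
theorem twoScaleAdj_approx_regOp_L2 (Ω : Set ℝ) (hΩ : MeasurableSet Ω)
    (hμΩ : volume Ω < ⊤)
    (v : ℝ → ℝ → ℝ)
    (hper : ∀ x y : ℝ, v x (y + 1) = v x y)
    (L : ℝ) (hL : 0 ≤ L)
    (hLip : ∀ x x' y : ℝ, |v x y - v x' y| ≤ L * |x - x'|)
    (ε : ℝ) (hε : 0 < ε) :
    Real.sqrt (∫ x in Ω, (twoScaleAdj ε v x - regOp ε v x) ^ 2) ≤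
      L * ε * Real.sqrt ((volume Ω).toReal) := by
  have hb : ∀ x ∈ Ω, (twoScaleAdj ε v x - regOp ε v x) ^ 2 ≤ (L * ε) ^ 2 := by
    intro x _
    have h := pointwise_bound v hper L hL hLip ε hε x
    calc (twoScaleAdj ε v x - regOp ε v x) ^ 2
        = |twoScaleAdj ε v x - regOp ε v x| ^ 2 := (sq_abs _).symm
      _ ≤ (L * ε) ^ 2 := pow_le_pow_left₀ (abs_nonneg _) h 2
  have hconst : IntegrableOn (fun _ : ℝ => (L * ε) ^ 2) Ω volume :=
    (integrableOn_const_iff).mpr (Or.inr hμΩ)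
  have hle : (∫ x in Ω, (twoScaleAdj ε v x - regOp ε v x) ^ 2) ≤
      ∫ _x in Ω, (L * ε) ^ 2 := by
    by_cases hI : IntegrableOn (fun x => (twoScaleAdj ε v x - regOp ε v x) ^ 2) Ω volume
    · exact setIntegral_mono_on hI hconst hΩ hb
    · rw [integral_undef hI]
      rw [setIntegral_const]
      positivity
  have hle2 : Real.sqrt (∫ x in Ω, (twoScaleAdj ε v x - regOp ε v x) ^ 2) ≤
      Real.sqrt ((volume Ω).toReal * (L * ε) ^ 2) := by
    apply Real.sqrt_le_sqrt
    rwa [setIntegral_const, smul_eq_mul] at hle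
  calc Real.sqrt (∫ x in Ω, (twoScaleAdj ε v x - regOp ε v x) ^ 2)
      ≤ Real.sqrt ((volume Ω).toReal * (L * ε) ^ 2) := hle2
    _ = Real.sqrt ((volume Ω).toReal) * (L * ε) := by
        rw [Real.sqrt_mul ENNReal.toReal_nonneg, Real.sqrt_sq (by positivity)]
    _ = L * ε * Real.sqrt ((volume Ω).toReal) := mul_comm _ _
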